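/- Let Ψ : (ℝ³∖{0}) × ℝ³ → ℝ be differentiable and suppose there exist constants μ, λ ∈ ℝ such that for all u ≠ 0 and all u̇ ∈ ℝ³: (i) 2Ψ(u, u̇) − 2·u̇·∇_{u̇}Ψ(u, u̇) − u·∇_uΨ(u, u̇) = 3μ, and (ii) u·∇_{u̇}Ψ(u, u̇) = 3(u·u̇)/‖u‖² − 3λ. Then λ = 0. (Compatibility of the system of partial differential equations for Ψ forces the multiplier λ to vanish.) -/

import Mathlib

noncomputable section
open RealInnerProductSpace

/-- Three-dimensional Euclidean space. -/
abbrev E3 := EuclideanSpace ℝ (Fin 3)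

/-- The cross product on ℝ³. -/
def cross (a b : E3) : E3 :=
  (WithLp.equiv 2 (Fin 3 → ℝ)).symm
    ![a 1 * b 2 - a 2 * b 1, a 2 * b 0 - a 0 * b 2, a 0 * b 1 - a 1 * b 0]

/-- The Euler–Poisson expression
𝓔(u, u̇, ü) = (ü × u)/‖u‖³ − 3((u̇·u)/‖u‖⁵)(u̇ × u) + (m/‖u‖³)(‖u‖² u̇ − (u̇·u) u). -/
def EP (m : ℝ) (u du ddu : E3) : E3 :=
  (‖u‖ ^ 3)⁻¹ • cross ddu u - (3 * ⟪du, u⟫ / ‖u‖ ^ 5) • cross du u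
    + (m / ‖u‖ ^ 3) • (‖u‖ ^ 2 • du - ⟪du, u⟫ • u)

lemma inner_grad (f : E3 → ℝ) (v y : E3) : ⟪y, gradient f v⟫ = fderiv ℝ f v y := by
  rw [real_inner_comm, gradient, InnerProductSpace.toDual_symm_apply]

/-- compatibility of the system of partial differential equations for Ψ
forces the multiplier λ to vanish. -/
theorem compatibility_forces_lambda_zero (Ψ : E3 × E3 → ℝ)
    (hΨ : ∀ (u du : E3), u ≠ 0 → DifferentiableAt ℝ Ψ (u, du))
    (μ lam : ℝ)
    (h₁ : ∀ (u du : E3), u ≠ 0 →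
      2 * Ψ (u, du) - 2 * ⟪du, gradient (fun w => Ψ (u, w)) du⟫
        - ⟪u, gradient (fun w => Ψ (w, du)) u⟫ = 3 * μ)
    (h₂ : ∀ (u du : E3), u ≠ 0 →
      ⟪u, gradient (fun w => Ψ (u, w)) du⟫ = 3 * ⟪u, du⟫ / ‖u‖ ^ 2 - 3 * lam) :
    lam = 0 := by
  set u₀ : E3 := EuclideanSpace.single 0 1 with hu₀def
  have hu₀norm : ‖u₀‖ = 1 := by simp [hu₀def]
  have hu₀ne : u₀ ≠ 0 := by
    intro h
    rw [h] at hu₀norm; simp at hu₀norm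
  have hinner : ⟪u₀, u₀⟫ = 1 := by
    rw [real_inner_self_eq_norm_sq, hu₀norm]; norm_num
  -- key derivative facts
  have key : ∀ s : ℝ, s ≠ 0 → ∀ t : ℝ,
      HasDerivAt (fun t' : ℝ => Ψ (s • u₀, t' • u₀)) (3*t/s^2 - 3*lam/s) t ∧
      HasDerivAt (fun s' : ℝ => Ψ (s' • u₀, t • u₀))
        ((2 * Ψ (s • u₀, t • u₀) - 2*(t*(3*t/s^2 - 3*lam/s)) - 3*μ)/s) s := by
    intro s hs t
    have hsu : (s • u₀ : E3) ≠ 0 := smul_ne_zero hs hu₀ne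
    have hd := hΨ (s • u₀) (t • u₀) hsu
    have hn : ‖(s • u₀ : E3)‖^2 = s^2 := by
      rw [norm_smul, hu₀norm]; simp [sq_abs]
    have hi : ⟪(s • u₀ : E3), t • u₀⟫ = s*t := by
      rw [real_inner_smul_left, real_inner_smul_right, hinner]; ring
    -- partial fderiv identities
    have hpt : fderiv ℝ (fun w => Ψ (s • u₀, w)) (t • u₀) =
        (fderiv ℝ Ψ (s • u₀, t • u₀)).comp (ContinuousLinearMap.inr ℝ E3 E3) := by
      exact (hd.hasFDerivAt.comp (t • u₀) (hasFDerivAt_prodMk_right (s • u₀) (t • u₀))).fderiv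
    have hps : fderiv ℝ (fun w => Ψ (w, t • u₀)) (s • u₀) =
        (fderiv ℝ Ψ (s • u₀, t • u₀)).comp (ContinuousLinearMap.inl ℝ E3 E3) := by
      exact (hd.hasFDerivAt.comp (s • u₀) (hasFDerivAt_prodMk_left (s • u₀) (t • u₀))).fderiv
    -- value of the t-partial along u₀
    have hval : ⟪u₀, gradient (fun w => Ψ (s • u₀, w)) (t • u₀)⟫ = 3*t/s^2 - 3*lam/s := by
      have h := h₂ (s • u₀) (t • u₀) hsu
      rw [real_inner_smul_left, hn, hi] at h
      have h' : s * ⟪u₀, gradient (fun w => Ψ (s • u₀, w)) (t • u₀)⟫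
          = 3*(s*t)/s^2 - 3*lam := h
      have h'' : s * ⟪u₀, gradient (fun w => Ψ (s • u₀, w)) (t • u₀)⟫
          = s * (3*t/s^2 - 3*lam/s) := by
        rw [h']; field_simp
      exact mul_left_cancel₀ hs h''
    constructor
    · -- t-derivative
      have hmt : HasDerivAt (fun t' : ℝ => ((s • u₀ : E3), t' • u₀)) (((0:E3), u₀)) t := by
        have h1 : HasDerivAt (fun t' : ℝ => t' • u₀) ((1:ℝ) • u₀) t :=
          (hasDerivAt_id t).smul_const u₀
        simpa using (hasDerivAt_const t (s • u₀)).prodMk h1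
      have hc := hd.hasFDerivAt.comp_hasDerivAt t hmt
      refine hc.congr_deriv (Eq.symm ?_)
      have : fderiv ℝ Ψ (s • u₀, t • u₀) ((0:E3), u₀)
          = fderiv ℝ (fun w => Ψ (s • u₀, w)) (t • u₀) u₀ := by rw [hpt]; rfl
      rw [this, ← inner_grad, hval]
    · -- s-derivative
      have hms : HasDerivAt (fun s' : ℝ => ((s' • u₀ : E3), t • u₀)) ((u₀, (0:E3))) s := by
        have h1 : HasDerivAt (fun s' : ℝ => s' • u₀) ((1:ℝ) • u₀) s :=
          (hasDerivAt_id s).smul_const u₀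
        simpa using h1.prodMk (hasDerivAt_const s (t • u₀))
      have hc := hd.hasFDerivAt.comp_hasDerivAt s hms
      refine hc.congr_deriv (Eq.symm ?_)
      have e1 : fderiv ℝ Ψ (s • u₀, t • u₀) (u₀, (0:E3))
          = fderiv ℝ (fun w => Ψ (w, t • u₀)) (s • u₀) u₀ := by rw [hps]; rfl
      have h := h₁ (s • u₀) (t • u₀) hsu
      rw [real_inner_smul_left, real_inner_smul_left, hval] at h
      rw [e1, ← inner_grad]
      rw [div_eq_iff hs]
      linarith [h]
  -- integrate in t
  have hB : ∀ s : ℝ, s ≠ 0 →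
      Ψ (s • u₀, (1:ℝ) • u₀) = Ψ (s • u₀, (0:ℝ) • u₀) + 3/(2*s^2) - 3*lam/s := by
    intro s hs
    have hf : ∀ t : ℝ, HasDerivAt
        (fun t : ℝ => Ψ (s • u₀, t • u₀) - (3*t^2/(2*s^2) - 3*lam*t/s)) 0 t := by
      intro t
      have h1 := (key s hs t).1
      have ha : HasDerivAt (fun t : ℝ => 3*t^2/(2*s^2) - 3*lam*t/s) (3*t/s^2 - 3*lam/s) t := by
        have hb : HasDerivAt (fun t : ℝ => t^2) (2*t) t := by
          simpa using hasDerivAt_pow 2 t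
        have hc : HasDerivAt (fun t : ℝ => 3*t^2/(2*s^2) - 3*lam*t/s)
            (3*(2*t)/(2*s^2) - 3*lam*1/s) t :=
          (((hb.const_mul 3).div_const (2*s^2)).sub
            (((hasDerivAt_id t).const_mul (3*lam)).div_const s))
        convert hc using 1
        field_simp
      exact (h1.sub ha).congr_deriv (sub_self _)
    have hconst := is_const_of_deriv_eq_zero (f := fun t : ℝ =>
        Ψ (s • u₀, t • u₀) - (3*t^2/(2*s^2) - 3*lam*t/s))
      (fun t => (hf t).differentiableAt) (fun t => (hf t).deriv) 1 0
    have : Ψ (s • u₀, (1:ℝ) • u₀) - (3*1^2/(2*s^2) - 3*lam*1/s)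
        = Ψ (s • u₀, (0:ℝ) • u₀) - (3*0^2/(2*s^2) - 3*lam*0/s) := hconst
    field_simp at this ⊢
    linarith
  -- two computations of the s-derivative at s = 1, t = 1
  have hD1 := (key 1 one_ne_zero 1).2
  have hD0 := (key 1 one_ne_zero 0).2
  have ha : HasDerivAt (fun s : ℝ => 3/(2*s^2)) (-3) 1 := by
    have hb : HasDerivAt (fun s : ℝ => s^2) (2*1) (1:ℝ) := by
      simpa using hasDerivAt_pow 2 (1:ℝ)
    have hc : HasDerivAt (fun s : ℝ => (2*s^2)) (2*(2*1)) (1:ℝ) := hb.const_mul 2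
    have hd : HasDerivAt (fun s : ℝ => (2*s^2)⁻¹) (-(2*(2*1))/(2*1^2)^2) (1:ℝ) :=
      hc.inv (by norm_num)
    have he := hd.const_mul 3
    have hfun : (fun s : ℝ => 3/(2*s^2)) = fun s => 3 * (2*s^2)⁻¹ := by
      funext s; rw [div_eq_mul_inv]
    rw [hfun]; refine he.congr_deriv (Eq.symm ?_); norm_num
  have hbb : HasDerivAt (fun s : ℝ => 3*lam/s) (-(3*lam)) 1 := by
    have hh := (hasDerivAt_inv (one_ne_zero : (1:ℝ) ≠ 0)).const_mul (3*lam)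
    have hfun : (fun s : ℝ => 3*lam/s) = fun s => 3*lam * s⁻¹ := by
      funext s; rw [div_eq_mul_inv]
    rw [hfun]; refine hh.congr_deriv (Eq.symm ?_); norm_num
  have hG : HasDerivAt (fun s : ℝ => Ψ (s • u₀, (0:ℝ) • u₀) + 3/(2*s^2) - 3*lam/s)
      ((2 * Ψ ((1:ℝ) • u₀, (0:ℝ) • u₀) - 2*(0*(3*0/1^2 - 3*lam/1)) - 3*μ)/1 + (-3) - (-(3*lam))) 1 :=
    (hD0.add ha).sub hbb
  have heq : (fun s : ℝ => Ψ (s • u₀, (1:ℝ) • u₀))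
      =ᶠ[nhds (1:ℝ)] (fun s : ℝ => Ψ (s • u₀, (0:ℝ) • u₀) + 3/(2*s^2) - 3*lam/s) := by
    have hne : ∀ᶠ s in nhds (1:ℝ), s ≠ 0 := eventually_ne_nhds one_ne_zero
    filter_upwards [hne] with s hs
    exact hB s hs
  have hG' := hG.congr_of_eventuallyEq heq
  have huniq := hD1.unique hG'
  have hB1 := hB 1 one_ne_zero
  norm_num at huniq hB1
  linarith
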